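/- For all natural numbers d, p ≥ 1, all Q_1, …, Q_t, K_1, …, K_t ∈ ℝ^d and V_1, …, V_t ∈ ℝ^v, power attention equals linear attention with the symmetric-power feature map: for every 1 ≤ i ≤ t, Σ_{j=1}^{i} (⟨Q_i, K_j⟩)^p V_j = S_i spow_p(Q_i), where S_i = Σ_{j=1}^{i} V_j spow_p(K_j)^T ∈ ℝ^{v×C(d+p−1,p)}. In particular, power attention admits a recurrent computation with a fixed state of size v · C(d+p−1, p). -/

import Mathlib

open scoped Classical

/-- hist_k(i): the number of positions j with i_j = k. -/
def hist {p d : ℕ} (i : Fin p → Fin d) (k : Fin d) : ℕ :=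
  (Finset.univ.filter (fun j => i j = k)).card

/-- The symmetric power embedding spow_p : ℝ^d → ℝ^{|NDMI^p_d|}, indexed by
non-decreasing multi-indices (monotone functions Fin p → Fin d), with entry
√(p! / ∏_k hist_k(i)!) · ∏_j x_{i_j}. -/
noncomputable def spow {d : ℕ} (p : ℕ) (x : Fin d → ℝ)
    (i : {f : Fin p → Fin d // Monotone f}) : ℝ :=
  Real.sqrt ((p.factorial : ℝ) / ∏ k, ((hist i.1 k).factorial : ℝ)) * ∏ j, x (i.1 j)

lemma sum_hist {p d : ℕ} (f : Fin p → Fin d) : ∑ k, hist f k = p := by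
  simp only [hist]
  rw [← Finset.card_eq_sum_card_fiberwise (fun x _ => Finset.mem_univ (f x))]
  simp

lemma card_filter_lt {p d : ℕ} (f : Fin p → Fin d) (k : Fin d) :
    (Finset.univ.filter (fun j => f j < k)).card = ∑ b ∈ Finset.Iio k, hist f b := by
  rw [Finset.card_eq_sum_card_fiberwise (f := f) (t := Finset.Iio k)
    (fun x hx => by simpa using (Finset.mem_filter.mp hx).2)]
  refine Finset.sum_congr rfl fun b hb => ?_
  simp only [hist, Finset.filter_filter]
  congr 1
  ext j
  simp only [Finset.mem_filter, Finset.mem_univ, true_and]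
  constructor
  · exact fun h => h.2
  · exact fun h => ⟨h ▸ Finset.mem_Iio.mp hb, h⟩

lemma mono_lt_iff {p d : ℕ} {f : Fin p → Fin d} (hf : Monotone f) (j : Fin p) (k : Fin d) :
    f j < k ↔ (j : ℕ) < ∑ b ∈ Finset.Iio k, hist f b := by
  rw [← card_filter_lt]
  constructor
  · intro h
    have hsub : Finset.Iic j ⊆ Finset.univ.filter (fun j' => f j' < k) := by
      intro j' hj'
      simp only [Finset.mem_filter, Finset.mem_univ, true_and]
      exact lt_of_le_of_lt (hf (Finset.mem_Iic.mp hj')) h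
    have := Finset.card_le_card hsub
    rw [Fin.card_Iic] at this
    omega
  · intro h
    by_contra hk
    push_neg at hk
    have hsub : Finset.univ.filter (fun j' => f j' < k) ⊆ Finset.Iio j := by
      intro j' hj'
      simp only [Finset.mem_filter, Finset.mem_univ, true_and] at hj'
      rw [Finset.mem_Iio]
      by_contra hle
      push_neg at hle
      exact absurd (lt_of_le_of_lt (le_trans hk (hf hle)) hj') (lt_irrefl _)
    have := Finset.card_le_card hsub
    rw [Fin.card_Iio] at this
    omega

lemma hist_inj {p d : ℕ} {f g : Fin p → Fin d} (hf : Monotone f) (hg : Monotone g)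
    (h : ∀ k, hist f k = hist g k) : f = g := by
  funext j
  have H : ∀ k, f j < k ↔ g j < k := by
    intro k
    rw [mono_lt_iff hf, mono_lt_iff hg]
    exact iff_of_eq (congrArg _ (Finset.sum_congr rfl fun b _ => h b))
  rcases lt_trichotomy (f j) (g j) with hlt | heq | hgt
  · exact absurd ((H (g j)).mp hlt) (lt_irrefl _)
  · exact heq
  · exact absurd ((H (f j)).mpr hgt) (lt_irrefl _)

lemma hist_eq_count {p d : ℕ} (f : Fin p → Fin d) (k : Fin d) :
    hist f k = Multiset.count k (Finset.univ.val.map f) := by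
  rw [Multiset.count_map]
  simp only [hist, Finset.card]
  rw [Finset.filter_val]
  congr 1
  exact Multiset.filter_congr (fun a _ => by constructor <;> exact fun h => h.symm)

lemma exists_monotone {d p : ℕ} (h : Fin d → ℕ) (hs : ∑ k, h k = p) :
    ∃ f : Fin p → Fin d, Monotone f ∧ ∀ k, hist f k = h k := by
  set m : Multiset (Fin d) := ∑ k, Multiset.replicate (h k) k with hm
  have hcard : Multiset.card m = p := by
    rw [hm]
    let c : Multiset (Fin d) →+ ℕ := ⟨⟨Multiset.card, Multiset.card_zero⟩, Multiset.card_add⟩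
    have hc := map_sum c (fun k => Multiset.replicate (h k) k) Finset.univ
    simp only [AddMonoidHom.coe_mk, ZeroHom.coe_mk, c] at hc
    rw [hc]
    simpa using hs
  set l := m.sort (· ≤ ·) with hl
  have hsort : l.Pairwise (· ≤ ·) := Multiset.pairwise_sort _ _
  have hml : (l : Multiset (Fin d)) = m := Multiset.sort_eq _ _
  have hlen : l.length = p := by rw [hl, Multiset.length_sort, hcard]
  subst hlen
  refine ⟨l.get, ?_, ?_⟩
  · rw [← List.sortedLE_ofFn_iff, List.ofFn_get, List.sortedLE_iff_pairwise]
    exact hsort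
  · intro k
    rw [hist_eq_count, Fin.univ_val_map, List.ofFn_get]
    rw [show ((l : Multiset (Fin d))) = m from hml, hm]
    rw [Multiset.count_sum']
    simp [Multiset.count_replicate]

lemma prod_comp_hist {p d : ℕ} (f : Fin p → Fin d) (g : Fin d → ℝ) :
    ∏ j, g (f j) = ∏ b, g b ^ hist f b := by
  rw [← Finset.prod_fiberwise_of_maps_to (g := f) (t := Finset.univ)
    (fun x _ => Finset.mem_univ (f x)) (fun j => g (f j))]
  refine Finset.prod_congr rfl fun b _ => ?_
  rw [Finset.prod_congr rfl (fun j hj => by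
    rw [(Finset.mem_filter.mp hj).2]), Finset.prod_const]
  rfl

lemma key {d : ℕ} (p : ℕ) (q k : Fin d → ℝ) :
    (∑ b, q b * k b) ^ p
      = ∑ idx : {f : Fin p → Fin d // Monotone f}, spow p k idx * spow p q idx := by
  have hterm : ∀ idx : {f : Fin p → Fin d // Monotone f},
      spow p k idx * spow p q idx
        = (Nat.multinomial Finset.univ (hist idx.1) : ℝ) * ∏ b, (q b * k b) ^ hist idx.1 b := by
    intro idx
    have hc : (0:ℝ) ≤ (p.factorial : ℝ) / ∏ b, ((hist idx.1 b).factorial : ℝ) := by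
      positivity
    have hmul : (Nat.multinomial Finset.univ (hist idx.1) : ℝ)
        = (p.factorial : ℝ) / ∏ b, ((hist idx.1 b).factorial : ℝ) := by
      have hspec := Nat.multinomial_spec Finset.univ (hist idx.1)
      rw [sum_hist] at hspec
      have hne : (∏ b, ((hist idx.1 b).factorial : ℝ)) ≠ 0 := by positivity
      field_simp
      rw [mul_comm]
      exact_mod_cast congrArg (Nat.cast : ℕ → ℝ) hspec
    rw [spow, spow]
    rw [mul_mul_mul_comm]
    rw [Real.mul_self_sqrt hc, ← hmul]
    congr 1
    rw [← Finset.prod_mul_distrib]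
    rw [show (fun j => k (idx.1 j) * q (idx.1 j)) = (fun j => (fun b => q b * k b) (idx.1 j))
      from funext fun j => mul_comm _ _]
    exact prod_comp_hist idx.1 (fun b => q b * k b)
  rw [Finset.sum_congr rfl (fun idx _ => hterm idx)]
  rw [Finset.sum_pow_eq_sum_piAntidiag]
  refine (Finset.sum_bij (fun idx _ => hist idx.1) ?_ ?_ ?_ ?_).symm
  · intro idx _
    rw [Finset.mem_piAntidiag]
    exact ⟨sum_hist idx.1, fun i _ => Finset.mem_univ i⟩
  · intro a _ b _ hab
    exact Subtype.ext (hist_inj a.2 b.2 (fun c => congrFun hab c))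
  · intro h hh
    rw [Finset.mem_piAntidiag] at hh
    obtain ⟨f, hf, hfh⟩ := exists_monotone h hh.1
    exact ⟨⟨f, hf⟩, Finset.mem_univ _, funext hfh⟩
  · intro idx _
    rfl

/-- Power attention equals linear attention with the
symmetric-power feature map: for 1 ≤ i ≤ t,
Σ_{j=1}^{i} (⟨Q_i, K_j⟩)^p V_j = S_i spow_p(Q_i), where
S_i = Σ_{j=1}^{i} V_j spow_p(K_j)^T.  Hence power attention admits a recurrent
computation with a fixed state of size v · C(d+p−1, p). -/
theorem power_attention_eq_linear_attention_spow
    (d p v t : ℕ) (hd : 1 ≤ d) (hp : 1 ≤ p)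
    (Q K : ℕ → Fin d → ℝ) (V : ℕ → Fin v → ℝ) :
    ∀ i : ℕ, 1 ≤ i → i ≤ t → ∀ a : Fin v,
      ∑ j ∈ Finset.Icc 1 i, (∑ b, Q i b * K j b) ^ p * V j a
        = ∑ idx : {f : Fin p → Fin d // Monotone f},
            (∑ j ∈ Finset.Icc 1 i, V j a * spow p (K j) idx) * spow p (Q i) idx := by
  intro i _ _ a
  simp_rw [Finset.sum_mul]
  rw [Finset.sum_comm]
  refine Finset.sum_congr rfl fun j _ => ?_
  rw [show ∀ x y : ℝ, x ^ p * y = y * x ^ p from fun x y => mul_comm _ _]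
  rw [key p (Q i) (K j), Finset.mul_sum]
  refine Finset.sum_congr rfl fun idx _ => ?_
  ring
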